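/- Assume 1 ≤ K < n and L ≥ 1. Then the constant-amplitude factorization set equals the constant-amplitude rank-constrained PSD Hankel–Toeplitz set: S_MF^C = S_HT^C. -/

import Mathlib

open Matrix Complex BigOperators
open scoped ComplexOrder

noncomputable section

/-- The Hankel operator `𝓗 : ℂ^N → ℂ^{n×n}`, `N = 2n-1` (0-indexed). -/
def hk (n : ℕ) (x : Fin (2*n-1) → ℂ) : Matrix (Fin n) (Fin n) ℂ :=
  Matrix.of fun j k => x ⟨j.1 + k.1, by have h1 := j.2; have h2 := k.2; omega⟩

/-- The Toeplitz operator `𝓣 : ℂ^N → ℂ^{n×n}`, `N = 2n-1` (0-indexed). -/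
def tp (n : ℕ) (t : Fin (2*n-1) → ℂ) : Matrix (Fin n) (Fin n) ℂ :=
  Matrix.of fun j k => t ⟨n - 1 + j.1 - k.1, by have h1 := j.2; have h2 := k.2; omega⟩

/-- The steering matrix `A(f) ∈ ℂ^{N×K}` with `A(f)_{jk} = e^{-i2π f_k (j-1)}` (1-indexed). -/
def Afull (n K : ℕ) (f : Fin K → ℝ) : Matrix (Fin (2*n-1)) (Fin K) ℂ :=
  Matrix.of fun j k => Complex.exp (Complex.I * Complex.ofReal (-(2 * Real.pi * f k * (j.1 : ℝ))))

/-- The matrix `A ∈ ℂ^{n×K}` formed by the first `n` rows of `A(f)`. -/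
def An (n K : ℕ) (f : Fin K → ℝ) : Matrix (Fin n) (Fin K) ℂ :=
  Matrix.of fun j k => Afull n K f ⟨j.1, by have h1 := j.2; omega⟩ k

/-- `S_0^C`: constant-amplitude multichannel signals `X = A(f) diag(b) Φ`. -/
def S0C (n K L : ℕ) : Set (Matrix (Fin (2*n-1)) (Fin L) ℂ) :=
  {X | ∃ (f : Fin K → ℝ) (b : Fin K → ℝ) (Φ : Matrix (Fin K) (Fin L) ℂ),
    (∀ k, f k ∈ Set.Ico (0:ℝ) 1) ∧ (∀ k, 0 < b k) ∧ (∀ k l, ‖Φ k l‖ = 1) ∧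
    X = Afull n K f * Matrix.diagonal (fun k => (b k : ℂ)) * Φ}

/-- `S_HT^C`: the constant-amplitude rank-constrained PSD Hankel-Toeplitz set. -/
def SHTC (n K L : ℕ) : Set (Matrix (Fin (2*n-1)) (Fin L) ℂ) :=
  {X | ∃ (t : Fin (2*n-1) → ℂ), ∀ l,
    (Matrix.fromBlocks (tp n (fun m => star (t m))) (hk n (fun m => star (X m l)))
       (hk n (fun m => X m l)) (tp n t)).PosSemidef ∧
    (Matrix.fromBlocks (tp n (fun m => star (t m))) (hk n (fun m => star (X m l)))
       (hk n (fun m => X m l)) (tp n t)).rank ≤ K}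

/-- `S_MF^C`: the constant-amplitude Hankel-Toeplitz factorization set. -/
def SMFC (n K L : ℕ) : Set (Matrix (Fin (2*n-1)) (Fin L) ℂ) :=
  {X | ∃ (t : Fin (2*n-1) → ℂ) (Z : Fin L → Matrix (Fin n) (Fin K) ℂ),
    ∀ l, hk n (fun m => X m l) = Z l * (Z l)ᵀ ∧ tp n t = Z l * (Z l)ᴴ}

/-- A real PSD matrix with few nonzero eigenvalues factors as `G * Gᵀ` with `G` of width `K`. -/
lemma real_psd_factor {m : Type*} [Fintype m] [DecidableEq m] (K : ℕ)
    (R : Matrix m m ℝ) (hR : R.PosSemidef)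
    (hcard : Fintype.card {i // hR.1.eigenvalues i ≠ 0} ≤ K) :
    ∃ G : Matrix m (Fin K) ℝ, R = G * Gᵀ := by
  classical
  obtain ⟨e⟩ : Nonempty ({i // hR.1.eigenvalues i ≠ 0} ↪ Fin K) :=
    Function.Embedding.nonempty_of_card_le (by simpa using hcard)
  set lam := hR.1.eigenvalues with hlam
  set U : Matrix m m ℝ := (hR.1.eigenvectorUnitary : Matrix m m ℝ) with hU
  let P : Matrix m (Fin K) ℝ := Matrix.of fun i k =>
    if h : lam i ≠ 0 then (if e ⟨i, h⟩ = k then Real.sqrt (lam i) else 0) else 0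
  have hPP : P * Pᵀ = Matrix.diagonal (RCLike.ofReal ∘ lam) := by
    ext i i'
    simp only [Matrix.mul_apply, Matrix.transpose_apply, Matrix.diagonal_apply, P,
      Matrix.of_apply, Function.comp, RCLike.ofReal_real_eq_id, id]
    by_cases h : lam i ≠ 0
    · by_cases h' : lam i' ≠ 0
      · simp only [dif_pos h, dif_pos h']
        rw [Finset.sum_eq_single (e ⟨i, h⟩)]
        · by_cases hii : i = i'
          · subst hii
            simp
            exact Real.mul_self_sqrt (hR.eigenvalues_nonneg i)
          · have : e ⟨i, h⟩ ≠ e ⟨i', h'⟩ := by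
              simp only [ne_eq, e.apply_eq_iff_eq]
              exact fun hc => hii (congrArg Subtype.val hc)
            simp [Ne.symm this, hii]
        · intro k _ hk
          simp [Ne.symm hk]
        · intro hk
          exact absurd (Finset.mem_univ _) hk
      · push_neg at h'
        have hii : i ≠ i' := fun hc => h (hc ▸ h')
        simp [h', hii]
    · push_neg at h
      have : ∀ k, (if h : lam i ≠ 0 then (if e ⟨i, h⟩ = k then Real.sqrt (lam i) else 0) else 0) = 0 := by
        intro k; simp [h]
      simp only [this, zero_mul, Finset.sum_const_zero]
      by_cases hii : i = i'
      · subst hii; simp [h]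
      · simp [hii]
  refine ⟨U * P, ?_⟩
  have hstarU : star U = Uᵀ := by
    ext i j; simp [Matrix.star_apply]
  calc R = U * Matrix.diagonal (RCLike.ofReal ∘ lam) * star U := hR.1.spectral_theorem
    _ = U * (P * Pᵀ) * Uᵀ := by rw [hPP, hstarU]
    _ = (U * P) * (U * P)ᵀ := by
        rw [Matrix.transpose_mul]; simp only [Matrix.mul_assoc]

/-- The block swap matrix. -/
def Jm (n : ℕ) : Matrix (Fin n ⊕ Fin n) (Fin n ⊕ Fin n) ℂ :=
  Matrix.fromBlocks 0 1 1 0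

/-- The real-structure change-of-basis matrix. -/
def Phi (n : ℕ) : Matrix (Fin n ⊕ Fin n) (Fin n ⊕ Fin n) ℂ :=
  Matrix.fromBlocks 1 (Complex.I • 1) 1 (-Complex.I • 1)

lemma map_smul_one (n : ℕ) (z : ℂ) :
    ((z • (1 : Matrix (Fin n) (Fin n) ℂ))).map (starRingEnd ℂ) = star z • 1 := by
  ext i j
  by_cases h : i = j <;> simp [Matrix.one_apply, h]

lemma PhiH (n : ℕ) : (Phi n)ᴴ =
    Matrix.fromBlocks 1 1 (-Complex.I • 1) (Complex.I • 1) := by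
  simp [Phi, Matrix.fromBlocks_conjTranspose, Matrix.conjTranspose_smul, Complex.star_def,
    Complex.conj_I]

lemma Phi_map_star (n : ℕ) : (Phi n).map (starRingEnd ℂ) =
    Matrix.fromBlocks 1 (-Complex.I • 1) 1 (Complex.I • 1) := by
  have h1 := map_smul_one n Complex.I
  have h2 := map_smul_one n (-Complex.I)
  have h3 : ((1 : Matrix (Fin n) (Fin n) ℂ)).map (starRingEnd ℂ) = 1 := by
    ext i j; by_cases h : i = j <;> simp [Matrix.one_apply, h]
  have h2' : ((-(Complex.I • (1 : Matrix (Fin n) (Fin n) ℂ)))).map (starRingEnd ℂ)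
      = Complex.I • 1 := by
    rw [← neg_smul, h2]; simp
  simp [Phi, Matrix.fromBlocks_map, h1, h2', h3, Complex.star_def, Complex.conj_I]

lemma PhiH_map_star (n : ℕ) : ((Phi n)ᴴ).map (starRingEnd ℂ) =
    Matrix.fromBlocks 1 1 (Complex.I • 1) (-Complex.I • 1) := by
  have h1 := map_smul_one n Complex.I
  have h2 := map_smul_one n (-Complex.I)
  have h3 : ((1 : Matrix (Fin n) (Fin n) ℂ)).map (starRingEnd ℂ) = 1 := by
    ext i j; by_cases h : i = j <;> simp [Matrix.one_apply, h]
  have h2' : ((-(Complex.I • (1 : Matrix (Fin n) (Fin n) ℂ)))).map (starRingEnd ℂ)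
      = Complex.I • 1 := by
    rw [← neg_smul, h2]; simp
  simp [PhiH, Matrix.fromBlocks_map, h1, h2', h3, Complex.star_def, Complex.conj_I]

lemma J_mul_Phi_map (n : ℕ) : Jm n * (Phi n).map (starRingEnd ℂ) = Phi n := by
  rw [Phi_map_star]
  simp [Jm, Phi, Matrix.fromBlocks_multiply]

lemma PhiH_map_mul_J (n : ℕ) : ((Phi n)ᴴ).map (starRingEnd ℂ) * Jm n = (Phi n)ᴴ := by
  rw [PhiH_map_star, PhiH]
  simp [Jm, Matrix.fromBlocks_multiply]

lemma smul_one_mul_smul_one (n : ℕ) (z w : ℂ) :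
    (z • (1 : Matrix (Fin n) (Fin n) ℂ)) * (w • 1) = (z * w) • 1 := by
  simp [Matrix.smul_mul, Matrix.mul_smul, smul_smul, mul_comm]

lemma Phi_mul_PhiH (n : ℕ) : Phi n * (Phi n)ᴴ = (2 : ℂ) • 1 := by
  rw [PhiH]
  rw [show ((2:ℂ) • (1 : Matrix (Fin n ⊕ Fin n) (Fin n ⊕ Fin n) ℂ)) =
      Matrix.fromBlocks ((2:ℂ) • 1) 0 0 ((2:ℂ) • 1) by
    rw [← Matrix.fromBlocks_one, Matrix.fromBlocks_smul]; simp]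
  rw [Phi, Matrix.fromBlocks_multiply, Matrix.fromBlocks_inj]
  refine ⟨?_, ?_, ?_, ?_⟩ <;>
    simp [Matrix.smul_mul, Matrix.mul_smul, smul_smul, Complex.I_mul_I, two_smul]

lemma PhiH_mul_Phi (n : ℕ) : (Phi n)ᴴ * Phi n = (2 : ℂ) • 1 := by
  rw [PhiH]
  rw [show ((2:ℂ) • (1 : Matrix (Fin n ⊕ Fin n) (Fin n ⊕ Fin n) ℂ)) =
      Matrix.fromBlocks ((2:ℂ) • 1) 0 0 ((2:ℂ) • 1) by
    rw [← Matrix.fromBlocks_one, Matrix.fromBlocks_smul]; simp]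
  rw [Phi, Matrix.fromBlocks_multiply, Matrix.fromBlocks_inj]
  refine ⟨?_, ?_, ?_, ?_⟩ <;>
    simp [Matrix.smul_mul, Matrix.mul_smul, smul_smul, Complex.I_mul_I, two_smul]

lemma J_mul_J (n : ℕ) : Jm n * Jm n = 1 := by
  rw [show (1 : Matrix (Fin n ⊕ Fin n) (Fin n ⊕ Fin n) ℂ) = Matrix.fromBlocks 1 0 0 1 from
    (Matrix.fromBlocks_one).symm]
  simp [Jm, Matrix.fromBlocks_multiply]


lemma aux_card_le {m : Type*} [Fintype m] [DecidableEq m] (K : ℕ)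
    (R' : Matrix m m ℝ) (U : Matrix m m ℝ) (lam : m → ℝ)
    (hU : star U * U = 1) (hR : R' = U * Matrix.diagonal lam * star U)
    (hrank : (R'.map Complex.ofRealHom).rank ≤ K) :
    Fintype.card {i // lam i ≠ 0} ≤ K := by
  classical
  set Uc := U.map Complex.ofRealHom with hUcdef
  have hstarUc : (star U).map Complex.ofRealHom = Ucᴴ := by
    ext i j
    simp [hUcdef, Matrix.conjTranspose_apply, Matrix.map_apply, Matrix.star_apply,
      Complex.conj_ofReal]
  have hUcU : Ucᴴ * Uc = 1 := by
    rw [← hstarUc, hUcdef, ← Matrix.map_mul, hU]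
    ext i j
    by_cases h : i = j <;> simp [Matrix.one_apply, h]
  have hspec : R'.map Complex.ofRealHom = Uc * Matrix.diagonal (fun i => (lam i : ℂ)) * Ucᴴ := by
    rw [hR, Matrix.map_mul, Matrix.map_mul, hstarUc]
    congr 1
    congr 1
    rw [Matrix.diagonal_map (by simp)]
    rfl
  have hdiag : Matrix.diagonal (fun i => (lam i : ℂ)) = Ucᴴ * R'.map Complex.ofRealHom * Uc := by
    rw [hspec]
    symm
    calc Ucᴴ * (Uc * Matrix.diagonal (fun i => (lam i : ℂ)) * Ucᴴ) * Uc
        = (Ucᴴ * Uc) * Matrix.diagonal (fun i => (lam i : ℂ)) * (Ucᴴ * Uc) := by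
          simp only [Matrix.mul_assoc]
      _ = Matrix.diagonal (fun i => (lam i : ℂ)) := by rw [hUcU]; simp
  have h5 : (Matrix.diagonal (fun i => (lam i : ℂ))).rank ≤ K := by
    rw [hdiag]
    refine le_trans (Matrix.rank_mul_le_left _ _) ?_
    exact le_trans (Matrix.rank_mul_le_right _ _) hrank
  rw [Matrix.rank_diagonal] at h5
  refine le_trans (le_of_eq ?_) h5
  refine Fintype.card_congr (Equiv.subtypeEquivRight fun i => ?_)
  simp

lemma key_factor (n K : ℕ) (M : Matrix (Fin n ⊕ Fin n) (Fin n ⊕ Fin n) ℂ)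
    (hsym : Jm n * M.map (starRingEnd ℂ) * Jm n = M)
    (hpsd : M.PosSemidef) (hrank : M.rank ≤ K) :
    ∃ B : Matrix (Fin n ⊕ Fin n) (Fin K) ℂ,
      M = B * Bᴴ ∧ ∀ j k, B (Sum.inl j) k = star (B (Sum.inr j) k) := by
  classical
  have hMc : M.map (starRingEnd ℂ) = Jm n * M * Jm n := by
    calc M.map (starRingEnd ℂ)
        = (Jm n * Jm n) * M.map (starRingEnd ℂ) * (Jm n * Jm n) := by
          rw [J_mul_J]; simp
      _ = Jm n * (Jm n * M.map (starRingEnd ℂ) * Jm n) * Jm n := by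
          simp only [Matrix.mul_assoc]
      _ = Jm n * M * Jm n := by rw [hsym]
  set R : Matrix (Fin n ⊕ Fin n) (Fin n ⊕ Fin n) ℂ := (Phi n)ᴴ * M * Phi n with hRdef
  have hRpsd : R.PosSemidef := hpsd.conjTranspose_mul_mul_same (Phi n)
  have hRc : R.map (starRingEnd ℂ) = R := by
    rw [hRdef, Matrix.map_mul, Matrix.map_mul, hMc]
    calc ((Phi n)ᴴ).map (starRingEnd ℂ) * (Jm n * M * Jm n) * (Phi n).map (starRingEnd ℂ)
        = (((Phi n)ᴴ).map (starRingEnd ℂ) * Jm n) * M * (Jm n * (Phi n).map (starRingEnd ℂ)) := by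
          simp only [Matrix.mul_assoc]
      _ = (Phi n)ᴴ * M * Phi n := by rw [PhiH_map_mul_J, J_mul_Phi_map, Matrix.mul_assoc]
  set R' : Matrix (Fin n ⊕ Fin n) (Fin n ⊕ Fin n) ℝ := Matrix.of (fun i j => (R i j).re)
    with hR'def
  have hRR' : R = R'.map Complex.ofRealHom := by
    ext i j
    have h := congrFun (congrFun hRc i) j
    simp only [Matrix.map_apply] at h ⊢
    exact (Complex.conj_eq_iff_re.mp h).symm
  have hR'psd : R'.PosSemidef := by
    rw [Matrix.posSemidef_iff_dotProduct_mulVec]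
    constructor
    · ext i j
      have h := congrFun (congrFun hRpsd.1 i) j
      simp only [Matrix.conjTranspose_apply] at h
      simp only [Matrix.conjTranspose_apply, hR'def, Matrix.of_apply, star_trivial]
      rw [← h]
      simp
    · intro x
      have h2 := hRpsd.dotProduct_mulVec_nonneg (fun i => (x i : ℂ))
      have key : (star (fun i => (x i : ℂ))) ⬝ᵥ (R *ᵥ fun i => (x i : ℂ))
          = ((star x ⬝ᵥ R' *ᵥ x : ℝ) : ℂ) := by
        rw [hRR']
        simp only [dotProduct, Matrix.mulVec, Matrix.map_apply, Pi.star_apply,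
          Complex.star_def, Complex.conj_ofReal, star_trivial, Complex.ofRealHom_eq_coe]
        push_cast
        rfl
      rw [key] at h2
      exact Complex.zero_le_real.mp h2
  -- eigen count
  have hRrank : (R'.map Complex.ofRealHom).rank ≤ K := by
    rw [← hRR', hRdef]
    refine le_trans (Matrix.rank_mul_le_left _ _) ?_
    exact le_trans (Matrix.rank_mul_le_right _ _) hrank
  have hcard : Fintype.card {i // hR'psd.1.eigenvalues i ≠ 0} ≤ K := by
    have h0 := hR'psd.1.spectral_theorem
    rw [show RCLike.ofReal ∘ hR'psd.1.eigenvalues = hR'psd.1.eigenvalues from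
      funext fun i => by simp [RCLike.ofReal_real_eq_id]] at h0
    exact aux_card_le K R' _ hR'psd.1.eigenvalues
      (Matrix.mem_unitaryGroup_iff'.mp (hR'psd.1.eigenvectorUnitary).2) h0 hRrank
  obtain ⟨G, hG⟩ := real_psd_factor K R' hR'psd hcard
  set Gc : Matrix (Fin n ⊕ Fin n) (Fin K) ℂ := G.map Complex.ofRealHom with hGcdef
  have hGcH : Gᵀ.map Complex.ofRealHom = Gcᴴ := by
    ext i j
    simp [hGcdef, Matrix.conjTranspose_apply, Matrix.map_apply, Complex.conj_ofReal]
  have hRGc : R = Gc * Gcᴴ := by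
    rw [hRR', hG, Matrix.map_mul, hGcH]
  refine ⟨(2 : ℂ)⁻¹ • (Phi n * Gc), ?_, ?_⟩
  · have h6 : Phi n * R * (Phi n)ᴴ = ((2:ℂ) • (1 : Matrix _ _ ℂ)) * M * ((2:ℂ) • 1) := by
      rw [hRdef]
      calc Phi n * ((Phi n)ᴴ * M * Phi n) * (Phi n)ᴴ
          = (Phi n * (Phi n)ᴴ) * M * (Phi n * (Phi n)ᴴ) := by simp only [Matrix.mul_assoc]
        _ = _ := by rw [Phi_mul_PhiH]
    have h7 : Phi n * R * (Phi n)ᴴ = (4:ℂ) • M := by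
      rw [h6, Matrix.smul_mul, Matrix.mul_smul, Matrix.one_mul, Matrix.mul_one, smul_smul]
      norm_num
    rw [Matrix.conjTranspose_smul, Matrix.smul_mul, Matrix.mul_smul, smul_smul]
    rw [Matrix.conjTranspose_mul]
    have h8 : Phi n * Gc * (Gcᴴ * (Phi n)ᴴ) = (4:ℂ) • M := by
      rw [← h7, hRGc]
      simp only [Matrix.mul_assoc]
    rw [h8, smul_smul]
    norm_num
  · intro j k
    have hGreal : ∀ x k', star (Gc x k') = Gc x k' := by
      intro x k'
      simp [hGcdef, Matrix.map_apply, Complex.conj_ofReal]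
    have hl : (Phi n * Gc) (Sum.inl j) k = Gc (Sum.inl j) k + Complex.I * Gc (Sum.inr j) k := by
      simp [Phi, Matrix.mul_apply, Fintype.sum_sum_type, Matrix.fromBlocks,
        Matrix.one_apply, ite_mul, zero_mul, Matrix.smul_apply, smul_eq_mul, mul_ite, mul_zero]
    have hr : (Phi n * Gc) (Sum.inr j) k = Gc (Sum.inl j) k - Complex.I * Gc (Sum.inr j) k := by
      simp [Phi, Matrix.mul_apply, Fintype.sum_sum_type, Matrix.fromBlocks,
        Matrix.one_apply, ite_mul, zero_mul, Matrix.smul_apply, smul_eq_mul, mul_ite, mul_zero,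
        sub_eq_add_neg]
    simp only [Matrix.smul_apply, hl, hr, smul_eq_mul, star_mul', star_sub, star_inv₀]
    rw [hGreal, hGreal, show star Complex.I = -Complex.I by
      simp [Complex.star_def, Complex.conj_I], show star (2:ℂ) = 2 by simp]
    ring

lemma J_conj (n : ℕ) (A B C D : Matrix (Fin n) (Fin n) ℂ) :
    Jm n * Matrix.fromBlocks A B C D * Jm n = Matrix.fromBlocks D C B A := by
  simp [Jm, Matrix.fromBlocks_multiply]


/-- Theorem 2: if `1 ≤ K < n` and `L ≥ 1` then `S_MF^C = S_HT^C`. -/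
theorem SMFC_eq_SHTC (n K L : ℕ) (hK : 1 ≤ K) (hKn : K < n) (hL : 1 ≤ L) :
    SMFC n K L = SHTC n K L := by
  ext X
  simp only [SMFC, SHTC, Set.mem_setOf_eq]
  constructor
  · rintro ⟨t, Z, h⟩
    refine ⟨t, fun l => ?_⟩
    obtain ⟨h1, h2⟩ := h l
    set B : Matrix (Fin n ⊕ Fin n) (Fin K) ℂ :=
      Matrix.fromRows ((Z l).map (starRingEnd ℂ)) (Z l) with hBdef
    have hZcH : ((Z l).map (starRingEnd ℂ))ᴴ = (Z l)ᵀ := by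
      ext i j; simp [Matrix.conjTranspose_apply, Matrix.map_apply]
    have hZT : ((Z l)ᴴ).map (starRingEnd ℂ) = (Z l)ᵀ := by
      ext i j; simp [Matrix.conjTranspose_apply, Matrix.map_apply]
    have hZTc : ((Z l)ᵀ).map (starRingEnd ℂ) = (Z l)ᴴ := by
      ext i j; simp [Matrix.conjTranspose_apply, Matrix.map_apply]
    have htpc : tp n (fun m => star (t m)) = (tp n t).map (starRingEnd ℂ) := rfl
    have hhkc : hk n (fun m => star (X m l)) = (hk n (fun m => X m l)).map (starRingEnd ℂ) := rfl
    have hM : Matrix.fromBlocks (tp n (fun m => star (t m))) (hk n (fun m => star (X m l)))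
        (hk n (fun m => X m l)) (tp n t) = B * Bᴴ := by
      rw [hBdef, Matrix.conjTranspose_fromRows_eq_fromCols_conjTranspose,
        Matrix.fromRows_mul_fromCols, Matrix.fromBlocks_inj]
      refine ⟨?_, ?_, ?_, ?_⟩
      · rw [htpc, h2, Matrix.map_mul, hZT, hZcH]
      · rw [hhkc, h1, Matrix.map_mul, hZTc]
      · rw [h1, hZcH]
      · exact h2
    constructor
    · rw [hM]; exact Matrix.posSemidef_self_mul_conjTranspose B
    · rw [hM, Matrix.rank_self_mul_conjTranspose]
      exact le_trans (Matrix.rank_le_card_width B) (by simp)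
  · rintro ⟨t, h⟩
    have hsym : ∀ l, Jm n * (Matrix.fromBlocks (tp n (fun m => star (t m)))
        (hk n (fun m => star (X m l))) (hk n (fun m => X m l)) (tp n t)).map (starRingEnd ℂ)
        * Jm n = Matrix.fromBlocks (tp n (fun m => star (t m)))
        (hk n (fun m => star (X m l))) (hk n (fun m => X m l)) (tp n t) := by
      intro l
      rw [Matrix.fromBlocks_map, J_conj]
      have e1 : (tp n (fun m => star (t m))).map (starRingEnd ℂ) = tp n t := by
        ext j k; simp [tp]
      have e2 : (hk n (fun m => star (X m l))).map (starRingEnd ℂ) = hk n (fun m => X m l) := by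
        ext j k; simp [hk]
      have e3 : (tp n t).map (starRingEnd ℂ) = tp n (fun m => star (t m)) := rfl
      have e4 : (hk n (fun m => X m l)).map (starRingEnd ℂ) =
        hk n (fun m => star (X m l)) := rfl
      rw [e1, e2, e3, e4]
    have hex : ∀ l, ∃ B : Matrix (Fin n ⊕ Fin n) (Fin K) ℂ,
        Matrix.fromBlocks (tp n (fun m => star (t m))) (hk n (fun m => star (X m l)))
          (hk n (fun m => X m l)) (tp n t) = B * Bᴴ ∧
        ∀ j k, B (Sum.inl j) k = star (B (Sum.inr j) k) :=
      fun l => key_factor n K _ (hsym l) (h l).1 (h l).2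
    choose B hB1 hB2 using hex
    refine ⟨t, fun l => Matrix.of fun j k => B l (Sum.inr j) k, fun l => ⟨?_, ?_⟩⟩
    · ext j k
      have e := congrFun (congrFun (hB1 l) (Sum.inr j)) (Sum.inl k)
      rw [Matrix.fromBlocks_apply₂₁] at e
      rw [e]
      simp [Matrix.mul_apply, Matrix.conjTranspose_apply, hB2 l, star_star]
    · ext j k
      have e := congrFun (congrFun (hB1 l) (Sum.inr j)) (Sum.inr k)
      rw [Matrix.fromBlocks_apply₂₂] at e
      rw [e]
      simp [Matrix.mul_apply, Matrix.conjTranspose_apply]
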